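/- In the lexicographic product A ×ₗ Θ, where Θ = ℚ ⊕ (Fin 2) ⊕ ℚ with its natural linear order (order type η + 2 + η) and A is any linear order, every equivalence class of the block relation has at most 2 elements. -/

import Mathlib

open Sum

private abbrev Th := ℚ ⊕ₗ (Fin 2 ⊕ₗ ℚ)

private def e0 : Th := toLex (Sum.inr (toLex (Sum.inl (0 : Fin 2))))
private def e1 : Th := toLex (Sum.inr (toLex (Sum.inl (1 : Fin 2))))

/-- the "neighbor" of a point of Θ -/
private def nb (t : Th) : Th :=
  match ofLex t with
  | Sum.inl _ => t
  | Sum.inr s =>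
    match ofLex s with
    | Sum.inl i => toLex (Sum.inr (toLex (Sum.inl (1 - i))))
    | Sum.inr _ => t

private lemma nb_e0 : nb e0 = e1 := rfl
private lemma nb_e1 : nb e1 = e0 := rfl

private lemma inf_help {T : Type*} (f : ℚ → T) (hf : Function.Injective f)
    {S : Set ℚ} (hS : S.Infinite) {X : Set T} (h : ∀ q ∈ S, f q ∈ X) : X.Infinite :=
  (hS.image hf.injOn).mono (Set.image_subset_iff.mpr h)

private lemma key {A : Type*} [LinearOrder A] {a b : A} {t u : Th}
    (h : toLex (a, t) < toLex (b, u)) (hadj : ¬(a = b ∧ t = e0 ∧ u = e1)) :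
    (Set.Icc (toLex (a, t)) (toLex (b, u)) :
      Set (Lex (A × Th))).Infinite := by
  have hinj : ∀ g : ℚ → Th, Function.Injective g →
      Function.Injective (fun q : ℚ => (toLex (b, g q) : Lex (A × Th))) := by
    intro g hg q q' hqq
    have : (b, g q) = (b, g q') := toLex.injective hqq
    exact hg (congrArg Prod.snd this)
  rw [Prod.Lex.lt_iff] at h
  rcases h with hab | ⟨hab, htu⟩
  · -- different A-coordinates: infinitely many points above (b, -∞)
    rcases u with q0 | s
    · exact inf_help _ (hinj (fun q => toLex (Sum.inl q))
        (fun _ _ hh => Sum.inl.inj (toLex.injective hh))) (Set.Iic_infinite q0)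
        (fun q hq => ⟨Prod.Lex.le_iff.mpr (Or.inl hab),
          Prod.Lex.le_iff.mpr (Or.inr ⟨rfl, Sum.Lex.inl_le_inl_iff.mpr hq⟩)⟩)
    · exact inf_help _ (hinj (fun q => toLex (Sum.inl q))
        (fun _ _ hh => Sum.inl.inj (toLex.injective hh))) Set.infinite_univ
        (fun q _ => ⟨Prod.Lex.le_iff.mpr (Or.inl hab),
          Prod.Lex.le_iff.mpr (Or.inr ⟨rfl, Sum.Lex.inl_le_inr _ _⟩)⟩)
  · subst hab
    rcases t with p | s
    · rcases u with q | s
      · -- inl p < inl q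
        have hpq : p < q := Sum.Lex.inl_lt_inl_iff.mp htu
        exact inf_help _ (hinj (fun q => toLex (Sum.inl q))
          (fun _ _ hh => Sum.inl.inj (toLex.injective hh))) (Set.Icc_infinite hpq)
          (fun r hr => ⟨Prod.Lex.le_iff.mpr (Or.inr ⟨rfl, Sum.Lex.inl_le_inl_iff.mpr hr.1⟩),
            Prod.Lex.le_iff.mpr (Or.inr ⟨rfl, Sum.Lex.inl_le_inl_iff.mpr hr.2⟩)⟩)
      · -- inl p < inr s
        exact inf_help _ (hinj (fun q => toLex (Sum.inl q))
          (fun _ _ hh => Sum.inl.inj (toLex.injective hh))) (Set.Ici_infinite p)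
          (fun r hr => ⟨Prod.Lex.le_iff.mpr (Or.inr ⟨rfl, Sum.Lex.inl_le_inl_iff.mpr hr⟩),
            Prod.Lex.le_iff.mpr (Or.inr ⟨rfl, Sum.Lex.inl_le_inr _ _⟩)⟩)
    · rcases u with q | s'
      · exact absurd htu Sum.Lex.not_inr_lt_inl
      · have hss : s < s' := Sum.Lex.inr_lt_inr_iff.mp htu
        rcases s with i | p
        · rcases s' with j | q
          · -- two Fin 2 points: must be the adjacent pair
            exfalso
            have hij : i < j := Sum.Lex.inl_lt_inl_iff.mp hss
            have hi : i = 0 := by omega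
            have hj : j = 1 := by omega
            exact hadj ⟨rfl, by rw [hi]; rfl, by rw [hj]; rfl⟩
          · -- inr (inl i) < inr (inr q)
            exact inf_help _ (hinj (fun r => toLex (Sum.inr (toLex (Sum.inr r))))
              (fun _ _ hh => Sum.inr.inj (toLex.injective
                (Sum.inr.inj (toLex.injective hh))))) (Set.Iic_infinite q)
              (fun r hr => ⟨Prod.Lex.le_iff.mpr (Or.inr ⟨rfl,
                  Sum.Lex.inr_le_inr_iff.mpr (Sum.Lex.inl_le_inr _ _)⟩),
                Prod.Lex.le_iff.mpr (Or.inr ⟨rfl,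
                  Sum.Lex.inr_le_inr_iff.mpr (Sum.Lex.inr_le_inr_iff.mpr hr)⟩)⟩)
        · rcases s' with j | q
          · exact absurd (Sum.Lex.inr_lt_inr_iff.mp htu) Sum.Lex.not_inr_lt_inl
          · have hpq : p < q := Sum.Lex.inr_lt_inr_iff.mp hss
            exact inf_help _ (hinj (fun r => toLex (Sum.inr (toLex (Sum.inr r))))
              (fun _ _ hh => Sum.inr.inj (toLex.injective
                (Sum.inr.inj (toLex.injective hh))))) (Set.Icc_infinite hpq)
              (fun r hr => ⟨Prod.Lex.le_iff.mpr (Or.inr ⟨rfl,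
                  Sum.Lex.inr_le_inr_iff.mpr (Sum.Lex.inr_le_inr_iff.mpr hr.1)⟩),
                Prod.Lex.le_iff.mpr (Or.inr ⟨rfl,
                  Sum.Lex.inr_le_inr_iff.mpr (Sum.Lex.inr_le_inr_iff.mpr hr.2)⟩)⟩)

/-- In the lexicographic product `A ×ₗ Θ`, where `Θ = ℚ ⊕ₗ (Fin 2 ⊕ₗ ℚ)` has order type
`η + 2 + η`, every block (equivalence class of the block relation) has at most 2 elements. -/
theorem theta_times_A_blocks_le_two (A : Type*) [LinearOrder A] :
    ∀ x : Lex (A × (ℚ ⊕ₗ (Fin 2 ⊕ₗ ℚ))),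
      ∃ s : Finset (Lex (A × (ℚ ⊕ₗ (Fin 2 ⊕ₗ ℚ)))),
        {y | (Set.Icc (min x y) (max x y)).Finite} ⊆ ↑s ∧ s.card ≤ 2 := by
  classical
  intro x
  obtain ⟨a, t, rfl⟩ : ∃ a t, x = toLex (a, t) := ⟨(ofLex x).1, (ofLex x).2, rfl⟩
  refine ⟨{toLex (a, t), toLex (a, nb t)}, ?_, ?_⟩
  · intro y hy
    obtain ⟨b, u, rfl⟩ : ∃ b u, y = toLex (b, u) := ⟨(ofLex y).1, (ofLex y).2, rfl⟩
    simp only [Finset.coe_insert, Finset.coe_singleton, Set.mem_insert_iff,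
      Set.mem_singleton_iff]
    by_contra hc
    push_neg at hc
    obtain ⟨h1, h2⟩ := hc
    rcases lt_trichotomy (toLex (a, t)) (toLex (b, u)) with hlt | heq | hgt
    · rw [Set.mem_setOf_eq, min_eq_left hlt.le, max_eq_right hlt.le] at hy
      refine key hlt ?_ hy
      rintro ⟨rfl, rfl, rfl⟩
      exact h2 (by rw [nb_e0])
    · exact h1 heq.symm
    · rw [Set.mem_setOf_eq, min_eq_right hgt.le, max_eq_left hgt.le] at hy
      refine key hgt ?_ hy
      rintro ⟨rfl, rfl, rfl⟩
      exact h2 (by rw [nb_e1])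
  · exact (Finset.card_insert_le _ _).trans (by simp)
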